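/- Menelaus' theorem in the Euclidean plane with signed ratios: For a triangle A₀A₁A₂ in ℝ² and points P on line(A₀A₁), Q on line(A₁A₂), R on line(A₂A₀), none equal to a vertex, the points P, Q, R are collinear if and only if the product of signed simple ratios s(A₀,P,A₁)·s(A₁,Q,A₂)·s(A₂,R,A₀) = −1, where s(A,P,B) is the unique real λ with P − A = λ·(B − P). -/

import Mathlib

lemma collinear_triple_det (p q r : ℝ × ℝ) :
    Collinear ℝ ({p, q, r} : Set (ℝ × ℝ)) ↔
      (q.1 - p.1) * (r.2 - p.2) - (q.2 - p.2) * (r.1 - p.1) = 0 := by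
  constructor
  · intro h
    rw [collinear_iff_of_mem (Set.mem_insert p _)] at h
    obtain ⟨v, hv⟩ := h
    obtain ⟨tq, hq⟩ := hv q (by simp)
    obtain ⟨tr, hr⟩ := hv r (by simp)
    have hq1 : q.1 = tq * v.1 + p.1 := by rw [hq]; rfl
    have hq2 : q.2 = tq * v.2 + p.2 := by rw [hq]; rfl
    have hr1 : r.1 = tr * v.1 + p.1 := by rw [hr]; rfl
    have hr2 : r.2 = tr * v.2 + p.2 := by rw [hr]; rfl
    rw [hq1, hq2, hr1, hr2]; ring
  · intro h
    by_cases hqp : q = p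
    · rw [hqp, Set.insert_comm, Set.insert_eq_self.2 (Set.mem_insert p _)]
      exact collinear_pair ℝ p r
    · rw [collinear_iff_of_mem (Set.mem_insert p _)]
      refine ⟨q - p, fun x hx => ?_⟩
      rcases hx with rfl | rfl | rfl
      · exact ⟨0, by simp⟩
      · exact ⟨1, by simp [Prod.ext_iff]⟩
      · by_cases h1 : q.1 = p.1
        · have h2 : q.2 ≠ p.2 := fun h2 => hqp (Prod.ext h1 h2)
          refine ⟨(x.2 - p.2) / (q.2 - p.2), ?_⟩
          have hne : (q.2 - p.2) ≠ 0 := sub_ne_zero.2 h2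
          have hx1 : x.1 = p.1 := by
            rw [h1] at h
            have : (q.2 - p.2) * (x.1 - p.1) = 0 := by linarith
            have := (mul_eq_zero.mp this).resolve_left hne
            linarith
          apply Prod.ext <;> simp [Prod.smul_def, h1, hx1] <;> field_simp <;> ring
        · refine ⟨(x.1 - p.1) / (q.1 - p.1), ?_⟩
          have hne : (q.1 - p.1) ≠ 0 := sub_ne_zero.2 h1
          apply Prod.ext <;> simp [Prod.smul_def] <;> field_simp <;> nlinarith [h]

theorem menelaus_euclidean_plane
    (A₀ A₁ A₂ P Q R : ℝ × ℝ) (lam₀ lam₁ lam₂ : ℝ)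
    (hind : AffineIndependent ℝ ![A₀, A₁, A₂])
    (hP : Collinear ℝ ({A₀, A₁, P} : Set (ℝ × ℝ)))
    (hQ : Collinear ℝ ({A₁, A₂, Q} : Set (ℝ × ℝ)))
    (hR : Collinear ℝ ({A₂, A₀, R} : Set (ℝ × ℝ)))
    (hPne : P ≠ A₀ ∧ P ≠ A₁) (hQne : Q ≠ A₁ ∧ Q ≠ A₂) (hRne : R ≠ A₂ ∧ R ≠ A₀)
    (hlam₀ : P - A₀ = lam₀ • (A₁ - P))
    (hlam₁ : Q - A₁ = lam₁ • (A₂ - Q))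
    (hlam₂ : R - A₂ = lam₂ • (A₀ - R)) :
    Collinear ℝ ({P, Q, R} : Set (ℝ × ℝ)) ↔ lam₀ * lam₁ * lam₂ = -1 := by
  have hne01 : A₀ ≠ A₁ := fun h => by
    have := hind.injective (a₁ := 0) (a₂ := 1) (by simp [h])
    simp at this
  have hne12 : A₁ ≠ A₂ := fun h => by
    have := hind.injective (a₁ := 1) (a₂ := 2) (by simp [h])
    simp at this
  have hne20 : A₂ ≠ A₀ := fun h => by
    have := hind.injective (a₁ := 2) (a₂ := 0) (by simp [h])
    simp at this
  have hncol : ¬ Collinear ℝ ({A₀, A₁, A₂} : Set (ℝ × ℝ)) := fun h =>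
    (collinear_iff_not_affineIndependent_set.mp h) hind
  have hD : (A₁.1 - A₀.1) * (A₂.2 - A₀.2) - (A₁.2 - A₀.2) * (A₂.1 - A₀.1) ≠ 0 := by
    intro h
    exact hncol ((collinear_triple_det _ _ _).mpr (by linarith))
  have e0a : P.1 - A₀.1 = lam₀ * (A₁.1 - P.1) := congrArg Prod.fst hlam₀
  have e0b : P.2 - A₀.2 = lam₀ * (A₁.2 - P.2) := congrArg Prod.snd hlam₀
  have e1a : Q.1 - A₁.1 = lam₁ * (A₂.1 - Q.1) := congrArg Prod.fst hlam₁
  have e1b : Q.2 - A₁.2 = lam₁ * (A₂.2 - Q.2) := congrArg Prod.snd hlam₁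
  have e2a : R.1 - A₂.1 = lam₂ * (A₀.1 - R.1) := congrArg Prod.fst hlam₂
  have e2b : R.2 - A₂.2 = lam₂ * (A₀.2 - R.2) := congrArg Prod.snd hlam₂
  have h0 : (1 : ℝ) + lam₀ ≠ 0 := by
    intro h
    have hl : lam₀ = -1 := by linarith
    rw [hl] at e0a e0b
    exact hne01 (Prod.ext (by linarith) (by linarith))
  have h1 : (1 : ℝ) + lam₁ ≠ 0 := by
    intro h
    have hl : lam₁ = -1 := by linarith
    rw [hl] at e1a e1b
    exact hne12 (Prod.ext (by linarith) (by linarith))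
  have h2 : (1 : ℝ) + lam₂ ≠ 0 := by
    intro h
    have hl : lam₂ = -1 := by linarith
    rw [hl] at e2a e2b
    exact hne20 (Prod.ext (by linarith) (by linarith))
  have p1 : P.1 = (A₀.1 + lam₀ * A₁.1) / (1 + lam₀) := by field_simp; linarith
  have p2 : P.2 = (A₀.2 + lam₀ * A₁.2) / (1 + lam₀) := by field_simp; linarith
  have q1 : Q.1 = (A₁.1 + lam₁ * A₂.1) / (1 + lam₁) := by field_simp; linarith
  have q2 : Q.2 = (A₁.2 + lam₁ * A₂.2) / (1 + lam₁) := by field_simp; linarith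
  have r1 : R.1 = (A₂.1 + lam₂ * A₀.1) / (1 + lam₂) := by field_simp; linarith
  have r2 : R.2 = (A₂.2 + lam₂ * A₀.2) / (1 + lam₂) := by field_simp; linarith
  have key : ((Q.1 - P.1) * (R.2 - P.2) - (Q.2 - P.2) * (R.1 - P.1)) *
      ((1 + lam₀) * (1 + lam₁) * (1 + lam₂)) =
      (1 + lam₀ * lam₁ * lam₂) *
      ((A₁.1 - A₀.1) * (A₂.2 - A₀.2) - (A₁.2 - A₀.2) * (A₂.1 - A₀.1)) := by
    rw [p1, p2, q1, q2, r1, r2]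
    field_simp
    ring
  rw [collinear_triple_det]
  constructor
  · intro h
    rw [h, zero_mul] at key
    have := (mul_eq_zero.mp key.symm).resolve_right hD
    linarith
  · intro h
    have : (1 : ℝ) + lam₀ * lam₁ * lam₂ = 0 := by linarith
    rw [this, zero_mul] at key
    have := (mul_eq_zero.mp key).resolve_right (by
      exact mul_ne_zero (mul_ne_zero h0 h1) h2)
    linarith
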